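/- For every natural number n there is an injective group homomorphism from the direct product ℤ × F_n, where F_n is the free group of rank n, into GL₂(ℤ[t, t⁻¹]), the group of invertible 2×2 matrices over the ring of Laurent polynomials in one variable over ℤ. -/

import Mathlib

open Matrix LaurentPolynomial Pointwise

namespace Stmt2Aux

/-- Conjugate of `[[1,6],[0,1]]` by the shear `[[1,0],[c,1]]`. -/
def mA (R : Type) [CommRing R] (c : R) : Matrix (Fin 2) (Fin 2) R :=
  !![1 - 6*c, 6; -6*c^2, 6*c + 1]

def mAinv (R : Type) [CommRing R] (c : R) : Matrix (Fin 2) (Fin 2) R :=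
  !![6*c + 1, -6; 6*c^2, 1 - 6*c]

lemma mA_mul_mAinv (R : Type) [CommRing R] (c : R) : mA R c * mAinv R c = 1 := by
  rw [mA, mAinv, Matrix.mul_fin_two, Matrix.one_fin_two]
  congr 1 <;> ring

lemma mAinv_mul_mA (R : Type) [CommRing R] (c : R) : mAinv R c * mA R c = 1 := by
  rw [mA, mAinv, Matrix.mul_fin_two, Matrix.one_fin_two]
  congr 1 <;> ring

def aU (R : Type) [CommRing R] (c : R) : GL (Fin 2) R :=
  ⟨mA R c, mAinv R c, mA_mul_mAinv R c, mAinv_mul_mA R c⟩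

lemma det_mA (R : Type) [CommRing R] (c : R) : (mA R c).det = 1 := by
  rw [mA, Matrix.det_fin_two_of]; ring

noncomputable def aR : ℕ → GL (Fin 2) ℝ := fun i => aU ℝ i

/-- nonzero vectors of the plane -/
def V : Type := {v : Fin 2 → ℝ // v ≠ 0}

noncomputable instance : MulAction (GL (Fin 2) ℝ) V where
  smul g v := ⟨(g : Matrix (Fin 2) (Fin 2) ℝ) *ᵥ v.1, by
    intro h0
    apply v.2
    have : (↑g⁻¹ : Matrix (Fin 2) (Fin 2) ℝ) *ᵥ ((↑g : Matrix (Fin 2) (Fin 2) ℝ) *ᵥ v.1) = 0 := by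
      rw [h0, Matrix.mulVec_zero]
    rwa [Matrix.mulVec_mulVec, Units.inv_mul, Matrix.one_mulVec] at this⟩
  one_smul v := Subtype.ext (show ((1 : GL (Fin 2) ℝ) : Matrix (Fin 2) (Fin 2) ℝ) *ᵥ v.1 = v.1 by
    simp)
  mul_smul g h v := Subtype.ext (show ((g * h : GL (Fin 2) ℝ) : Matrix (Fin 2) (Fin 2) ℝ) *ᵥ v.1
      = (g : Matrix (Fin 2) (Fin 2) ℝ) *ᵥ ((h : Matrix (Fin 2) (Fin 2) ℝ) *ᵥ v.1) by
    rw [Matrix.mulVec_mulVec, Units.val_mul])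

lemma smul_val (g : GL (Fin 2) ℝ) (v : V) :
    (g • v).1 = (g : Matrix (Fin 2) (Fin 2) ℝ) *ᵥ v.1 := rfl

def uu (i : ℕ) (v : Fin 2 → ℝ) : ℝ := v 1 - i * v 0

def XX (i : ℕ) : Set V := {v | 0 < v.1 0 * uu i v.1 ∧ 3 * |uu i v.1| ≤ |v.1 0|}

def YY (i : ℕ) : Set V :=
  {v | v.1 0 * uu i v.1 ≤ 0 ∧ 3 * |uu i v.1| ≤ |v.1 0| ∧ v.1 0 ≠ 0}

lemma core1 {x u : ℝ} (h : ¬(x*u ≤ 0 ∧ 3*|u| ≤ |x| ∧ x ≠ 0)) (hv : ¬(x = 0 ∧ u = 0)) :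
    0 < (x + 6*u) * u ∧ 3*|u| ≤ |x + 6*u| := by
  by_cases hc : 3*|u| ≤ |x|
  · have hx : x ≠ 0 := by
      intro hx0
      apply hv
      refine ⟨hx0, ?_⟩
      rw [hx0] at hc; simp at hc
      nlinarith [abs_nonneg u, abs_eq_zero.mp (le_antisymm (by linarith) (abs_nonneg u))]
    have hxu : 0 < x * u := by
      by_contra hle
      push_neg at hle
      exact h ⟨hle, hc, hx⟩
    constructor
    · nlinarith [sq_nonneg u]
    · rcases abs_cases x with ⟨h1, h2⟩ | ⟨h1, h2⟩ <;>
        rcases abs_cases u with ⟨h3, h4⟩ | ⟨h3, h4⟩ <;>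
        rcases abs_cases (x + 6*u) with ⟨h5, h6⟩ | ⟨h5, h6⟩ <;> nlinarith
  · push_neg at hc
    have hu : u ≠ 0 := by
      intro hu0; rw [hu0] at hc; simp at hc
      exact absurd (abs_nonneg x) (not_le.mpr hc)
    have hupos : 0 < |u| := abs_pos.mpr hu
    have h1 : -(|x| * |u|) ≤ x * u := by rw [← abs_mul]; exact neg_abs_le _
    have h2 : |6*u| - |(-x)| ≤ |6*u - (-x)| := abs_sub_abs_le_abs_sub _ _
    have h3 : |6*u| = 6 * |u| := by rw [abs_mul]; norm_num
    have h4 : |(-x)| = |x| := abs_neg x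
    have h5 : (6*u - (-x)) = x + 6*u := by ring
    rw [h3, h4, h5] at h2
    constructor
    · nlinarith [sq_abs u]
    · linarith

lemma core2 {x u : ℝ} (h : ¬(0 < x*u ∧ 3*|u| ≤ |x|)) (hv : ¬(x = 0 ∧ u = 0)) :
    (x - 6*u) * u ≤ 0 ∧ 3*|u| ≤ |x - 6*u| ∧ x - 6*u ≠ 0 := by
  by_cases hc : 3*|u| ≤ |x|
  · have hxu : x * u ≤ 0 := by
      by_contra hle
      push_neg at hle
      exact h ⟨hle, hc⟩
    have hx : x ≠ 0 := by
      intro hx0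
      apply hv
      refine ⟨hx0, ?_⟩
      rw [hx0] at hc; simp at hc
      nlinarith [abs_nonneg u, abs_eq_zero.mp (le_antisymm (by linarith) (abs_nonneg u))]
    have habs : 3*|u| ≤ |x - 6*u| ∧ x - 6*u ≠ 0 := by
      have hxe : 0 < |x| := abs_pos.mpr hx
      have : |x| + 6*|u| ≤ |x - 6*u| ∨ |x - 6*u| = |x| + 6*|u| := by
        right
        rcases abs_cases x with ⟨h1, h2⟩ | ⟨h1, h2⟩ <;>
          rcases abs_cases u with ⟨h3, h4⟩ | ⟨h3, h4⟩ <;>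
          rcases abs_cases (x - 6*u) with ⟨h5, h6⟩ | ⟨h5, h6⟩ <;> nlinarith
      rcases this with h' | h'
      · constructor
        · nlinarith [abs_nonneg u, abs_nonneg x]
        · intro h0; rw [h0] at h'; simp at h'; nlinarith [abs_nonneg u]
      · constructor
        · rw [h']; nlinarith [abs_nonneg u]
        · intro h0; rw [h0] at h'; simp at h'; nlinarith [abs_nonneg u]
    exact ⟨by nlinarith [sq_nonneg u], habs.1, habs.2⟩
  · push_neg at hc
    have hu : u ≠ 0 := by
      intro hu0; rw [hu0] at hc; simp at hc
      exact absurd (abs_nonneg x) (not_le.mpr hc)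
    have hupos : 0 < |u| := abs_pos.mpr hu
    have h1 : x * u ≤ |x| * |u| := by rw [← abs_mul]; exact le_abs_self _
    have hneg : (x - 6*u) * u < 0 := by nlinarith [sq_abs u]
    have h2 : |(-(6*u))| - |(-x)| ≤ |(-(6*u)) - (-x)| := abs_sub_abs_le_abs_sub _ _
    have h3 : |(-(6*u))| = 6 * |u| := by rw [abs_neg, abs_mul]; norm_num
    have h4 : |(-x)| = |x| := abs_neg x
    have h5 : ((-(6*u)) - (-x)) = x - 6*u := by ring
    rw [h3, h4, h5] at h2
    refine ⟨le_of_lt hneg, by linarith, ?_⟩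
    intro h0; rw [h0] at hneg; simp at hneg

lemma aR_smul_val0 (i : ℕ) (v : V) :
    (aR i • v).1 0 = v.1 0 + 6 * uu i v.1 := by
  rw [smul_val]
  show (mA ℝ i *ᵥ v.1) 0 = _
  simp [mA, Matrix.mulVec, dotProduct, Fin.sum_univ_two, uu]
  ring

lemma aR_smul_val1 (i : ℕ) (v : V) :
    (aR i • v).1 1 = v.1 1 + 6 * i * uu i v.1 := by
  rw [smul_val]
  show (mA ℝ i *ᵥ v.1) 1 = _
  simp [mA, Matrix.mulVec, dotProduct, Fin.sum_univ_two, uu]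
  ring

lemma uu_aR_smul (i : ℕ) (v : V) : uu i (aR i • v).1 = uu i v.1 := by
  rw [uu, aR_smul_val0, aR_smul_val1, uu]
  ring

lemma aRinv_smul_val0 (i : ℕ) (v : V) :
    ((aR i)⁻¹ • v).1 0 = v.1 0 - 6 * uu i v.1 := by
  rw [smul_val]
  show (mAinv ℝ i *ᵥ v.1) 0 = _
  simp [mAinv, Matrix.mulVec, dotProduct, Fin.sum_univ_two, uu]
  ring

lemma aRinv_smul_val1 (i : ℕ) (v : V) :
    ((aR i)⁻¹ • v).1 1 = v.1 1 - 6 * i * uu i v.1 := by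
  rw [smul_val]
  show (mAinv ℝ i *ᵥ v.1) 1 = _
  simp [mAinv, Matrix.mulVec, dotProduct, Fin.sum_univ_two, uu]
  ring

lemma uu_aRinv_smul (i : ℕ) (v : V) : uu i ((aR i)⁻¹ • v).1 = uu i v.1 := by
  rw [uu, aRinv_smul_val0, aRinv_smul_val1, uu]
  ring

lemma vne (v : V) : ¬(v.1 0 = 0 ∧ uu i v.1 = 0) := by
  rintro ⟨h0, h1⟩
  apply v.2
  funext j
  fin_cases j
  · exact h0
  · rw [uu, h0] at h1; simpa using h1

lemma hX_pp (i : ℕ) : aR i • (YY i)ᶜ ⊆ XX i := by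
  rintro p ⟨v, hv, rfl⟩
  have h := core1 (x := v.1 0) (u := uu i v.1) (by simpa [YY] using hv) (vne v)
  constructor
  · rw [aR_smul_val0, uu_aR_smul]; exact h.1
  · rw [aR_smul_val0, uu_aR_smul]; exact h.2

lemma hY_pp (i : ℕ) : (aR i)⁻¹ • (XX i)ᶜ ⊆ YY i := by
  rintro p ⟨v, hv, rfl⟩
  have h := core2 (x := v.1 0) (u := uu i v.1) (by simpa [XX] using hv) (vne v)
  refine ⟨?_, ?_, ?_⟩
  · rw [aRinv_smul_val0, uu_aRinv_smul]; exact h.1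
  · rw [aRinv_smul_val0, uu_aRinv_smul]; exact h.2.1
  · rw [aRinv_smul_val0]; exact h.2.2

lemma key_disj {i j : ℕ} (hij : i ≠ j) (v : V) (hi : 3 * |uu i v.1| ≤ |v.1 0|)
    (hj : 3 * |uu j v.1| ≤ |v.1 0|) (hx : v.1 0 ≠ 0) : False := by
  have h1 : (1:ℝ) ≤ |(j:ℝ) - (i:ℝ)| := by
    have : ((j:ℤ) - (i:ℤ)) ≠ 0 := sub_ne_zero.mpr (by exact_mod_cast hij.symm)
    have h2 : (1:ℤ) ≤ |(j:ℤ) - (i:ℤ)| := Int.one_le_abs this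
    calc (1:ℝ) = ((1:ℤ):ℝ) := by norm_num
    _ ≤ ((|(j:ℤ) - (i:ℤ)|:ℤ):ℝ) := by exact_mod_cast h2
    _ = |(j:ℝ) - (i:ℝ)| := by rw [Int.cast_abs]; push_cast; ring_nf
  have heq : uu i v.1 - uu j v.1 = ((j:ℝ) - (i:ℝ)) * v.1 0 := by
    simp [uu]; ring
  have h3 : |uu i v.1 - uu j v.1| ≤ |uu i v.1| + |uu j v.1| := abs_sub _ _
  rw [heq, abs_mul] at h3
  have hxp : 0 < |v.1 0| := abs_pos.mpr hx
  nlinarith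

lemma hXdisj : Pairwise (Function.onFun Disjoint XX) := by
  intro i j hij
  rw [Function.onFun, Set.disjoint_left]
  rintro v ⟨hi1, hi2⟩ ⟨hj1, hj2⟩
  exact key_disj hij v hi2 hj2 (fun h0 => by rw [h0] at hi1; simpa using hi1)

lemma hYdisj : Pairwise (Function.onFun Disjoint YY) := by
  intro i j hij
  rw [Function.onFun, Set.disjoint_left]
  rintro v ⟨_, hi2, hx⟩ ⟨_, hj2, _⟩
  exact key_disj hij v hi2 hj2 hx

lemma hXYdisj (i j : ℕ) : Disjoint (XX i) (YY j) := by
  rw [Set.disjoint_left]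
  rintro v ⟨hi1, hi2⟩ ⟨hj1, hj2, hx⟩
  rcases eq_or_ne i j with rfl | hij
  · nlinarith
  · exact key_disj hij v hi2 hj2 hx

lemma hXnonempty (i : ℕ) : (XX i).Nonempty := by
  refine ⟨⟨![3, 3*i + 1], ?_⟩, ?_, ?_⟩
  · intro h
    have := congrFun h 0
    norm_num at this
  · show (0:ℝ) < ![3, 3*(i:ℝ)+1] 0 * uu i ![3, 3*(i:ℝ)+1]
    have : uu i ![3, 3*(i:ℝ)+1] = 1 := by simp [uu]; ring
    rw [this]
    norm_num
  · show 3 * |uu i ![3, 3*(i:ℝ)+1]| ≤ |![3, 3*(i:ℝ)+1] 0|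
    have : uu i ![3, 3*(i:ℝ)+1] = 1 := by simp [uu]; ring
    rw [this]
    norm_num

lemma liftR_injective : Function.Injective (FreeGroup.lift aR : FreeGroup ℕ →* GL (Fin 2) ℝ) :=
  FreeGroup.injective_lift_of_ping_pong aR XX YY hXnonempty hXdisj hYdisj hXYdisj hX_pp hY_pp


/-- `F(Fin n) → F(ℕ)` induced by `Fin.val` is injective. -/
lemma mapVal_injective (n : ℕ) :
    Function.Injective (FreeGroup.map (Fin.val : Fin n → ℕ)) := by
  rcases Nat.eq_zero_or_pos n with rfl | hn
  · intro a b _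
    exact Subsingleton.elim a b
  · have hleft : Function.LeftInverse (FreeGroup.map (fun m : ℕ => (⟨m % n, Nat.mod_lt m hn⟩ : Fin n)))
        (FreeGroup.map (Fin.val : Fin n → ℕ)) := by
      intro x
      rw [FreeGroup.map.comp]
      have : ((fun m : ℕ => (⟨m % n, Nat.mod_lt m hn⟩ : Fin n)) ∘ (Fin.val : Fin n → ℕ)) = id := by
        funext i
        exact Fin.ext (Nat.mod_eq_of_lt i.isLt)
      rw [this]
      exact FreeGroup.map.id x
    exact hleft.injective

def aZ : ℕ → GL (Fin 2) ℤ := fun i => aU ℤ i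

noncomputable def jZR : GL (Fin 2) ℤ →* GL (Fin 2) ℝ :=
  Units.map ((Int.castRingHom ℝ).mapMatrix).toMonoidHom

lemma jZR_aZ (i : ℕ) : jZR (aZ i) = aR i := by
  apply Units.ext
  show (Int.castRingHom ℝ).mapMatrix (mA ℤ i) = mA ℝ i
  ext a b
  fin_cases a <;> fin_cases b <;> simp [mA] <;> push_cast <;> ring

lemma rho_injective (n : ℕ) :
    Function.Injective (FreeGroup.lift (fun i : Fin n => aZ i.1) :
      FreeGroup (Fin n) →* GL (Fin 2) ℤ) := by
  have hcomp : jZR.comp (FreeGroup.lift (fun i : Fin n => aZ i.1)) =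
      (FreeGroup.lift aR).comp (FreeGroup.map (Fin.val : Fin n → ℕ)) := by
    apply FreeGroup.ext_hom
    intro i
    simp [jZR_aZ]
  have hinj : Function.Injective
      (⇑jZR ∘ ⇑(FreeGroup.lift (fun i : Fin n => aZ i.1))) := by
    rw [← MonoidHom.coe_comp, hcomp, MonoidHom.coe_comp]
    exact Function.Injective.comp liftR_injective (mapVal_injective n)
  exact Function.Injective.of_comp hinj

/-- `T` as a unit of the Laurent polynomial ring. -/
noncomputable def tU : (LaurentPolynomial ℤ)ˣ :=
  ⟨T 1, T (-1), by rw [← T_add]; simp, by rw [← T_add]; simp⟩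

lemma tU_pow_ne_one {k : ℕ} (hk : k ≠ 0) : tU ^ k ≠ 1 := by
  intro h
  have hval : ((tU ^ k : (LaurentPolynomial ℤ)ˣ) : LaurentPolynomial ℤ) = 1 := by rw [h]; rfl
  rw [Units.val_pow_eq_pow_val] at hval
  have hT : (tU : LaurentPolynomial ℤ) = T 1 := rfl
  rw [hT] at hval
  have : (T 1 : LaurentPolynomial ℤ) ^ k = T (k : ℤ) := by
    rw [T_pow]; norm_num
  rw [this] at hval
  have h0 : (T (k:ℤ) : LaurentPolynomial ℤ).coeff (k:ℤ) = (1 : LaurentPolynomial ℤ).coeff (k:ℤ) := by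
    rw [hval]
  have h1 : (T (k:ℤ) : LaurentPolynomial ℤ).coeff (k:ℤ) = 1 := by simp
  have h2 : (1 : LaurentPolynomial ℤ).coeff (k:ℤ) = 0 := by
    rw [← T_zero, T_apply, if_neg]
    exact_mod_cast Ne.symm hk
  rw [h1, h2] at h0
  exact one_ne_zero h0

lemma tU_zpow_eq_one {z : ℤ} (h : tU ^ z = 1) : z = 0 := by
  rcases Int.natAbs_eq z with hz | hz
  · by_contra h0
    have : z.natAbs ≠ 0 := by
      intro hh; apply h0; rw [hz, hh]; rfl
    apply tU_pow_ne_one this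
    rw [← zpow_natCast, ← hz, h]
  · by_contra h0
    have : z.natAbs ≠ 0 := by
      intro hh; apply h0; rw [hz, hh]; rfl
    apply tU_pow_ne_one this
    rw [← zpow_natCast]
    have hzz : ((z.natAbs : ℤ)) = -z := by omega
    rw [hzz, _root_.zpow_neg, h, inv_one]

/-- scalar matrix `diag(T,T)` as an element of `GL₂`. -/
noncomputable def cU : GL (Fin 2) (LaurentPolynomial ℤ) :=
  Units.map (Matrix.scalar (Fin 2)).toMonoidHom tU

lemma det_cU : Matrix.GeneralLinearGroup.det cU = tU * tU := by
  apply Units.ext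
  rw [Matrix.GeneralLinearGroup.val_det_apply, Units.val_mul]
  show ((Matrix.scalar (Fin 2)) (T 1)).det = T 1 * T 1
  rw [show (Matrix.scalar (Fin 2)) (T 1 : LaurentPolynomial ℤ)
      = Matrix.diagonal (fun _ => T 1) from rfl, Matrix.det_diagonal]
  simp [Fin.prod_univ_two]
  rw [show (2:ℤ) = 1 + 1 by norm_num, T_add]

noncomputable def jL : GL (Fin 2) ℤ →* GL (Fin 2) (LaurentPolynomial ℤ) :=
  Units.map ((LaurentPolynomial.C : ℤ →+* LaurentPolynomial ℤ).mapMatrix).toMonoidHom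

lemma C_injective : Function.Injective (LaurentPolynomial.C : ℤ →+* LaurentPolynomial ℤ) := by
  intro a b h
  have h0 := congrArg (fun p : LaurentPolynomial ℤ => p.coeff 0) h
  simp only [LaurentPolynomial.C_apply, if_pos rfl] at h0
  exact h0

lemma jL_injective : Function.Injective jL :=
  Units.map_injective (Matrix.map_injective C_injective)

lemma cU_commute (x : GL (Fin 2) (LaurentPolynomial ℤ)) : Commute cU x := by
  have : (cU : Matrix (Fin 2) (Fin 2) (LaurentPolynomial ℤ)) * x = x * cU := by
    exact Matrix.scalar_commute (T 1 : LaurentPolynomial ℤ) (fun r' => Commute.all _ _) _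
  exact Units.ext (by simpa [Units.val_mul] using this)

lemma det_jL_rho (n : ℕ) (w : FreeGroup (Fin n)) :
    Matrix.GeneralLinearGroup.det (jL ((FreeGroup.lift (fun i : Fin n => aZ i.1)) w)) = 1 := by
  have : (Matrix.GeneralLinearGroup.det.comp (jL.comp (FreeGroup.lift (fun i : Fin n => aZ i.1))))
      = 1 := by
    apply FreeGroup.ext_hom
    intro i
    simp only [MonoidHom.comp_apply, FreeGroup.lift_apply_of, MonoidHom.one_apply]
    apply Units.ext
    rw [Matrix.GeneralLinearGroup.val_det_apply]
    show ((LaurentPolynomial.C.mapMatrix : Matrix (Fin 2) (Fin 2) ℤ →+* _) (mA ℤ i.1)).det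
      = ((1 : (LaurentPolynomial ℤ)ˣ) : LaurentPolynomial ℤ)
    rw [← RingHom.map_det, det_mA, RingHom.map_one, Units.val_one]
  have h2 := congrArg (fun g => g w) this
  simpa using h2

end Stmt2Aux

/-- For every `n`, the direct product `ℤ × F_n` of the infinite cyclic group with the
free group of rank `n` embeds into `GL₂(ℤ[t,t⁻¹])`, the group of invertible `2 × 2`
matrices over the ring of Laurent polynomials in one variable over `ℤ`. -/
theorem stmt_2 (n : ℕ) :
    ∃ f : (Multiplicative ℤ × FreeGroup (Fin n)) →* GL (Fin 2) (LaurentPolynomial ℤ),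
      Function.Injective f := by
  classical
  set ρ : FreeGroup (Fin n) →* GL (Fin 2) ℤ :=
    FreeGroup.lift (fun i : Fin n => Stmt2Aux.aZ i.1) with hρ
  refine ⟨MonoidHom.noncommCoprod (zpowersHom _ Stmt2Aux.cU) (Stmt2Aux.jL.comp ρ)
      (fun m h => (Stmt2Aux.cU_commute _).zpow_left _), ?_⟩
  rw [injective_iff_map_eq_one]
  rintro ⟨k, w⟩ h
  change zpowersHom _ Stmt2Aux.cU k * (Stmt2Aux.jL.comp ρ) w = 1 at h
  have hdet := congrArg Matrix.GeneralLinearGroup.det h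
  rw [_root_.map_mul, _root_.map_one] at hdet
  simp only [zpowersHom_apply, map_zpow, MonoidHom.comp_apply] at hdet
  rw [Stmt2Aux.det_jL_rho, mul_one, Stmt2Aux.det_cU] at hdet
  have hz : (Multiplicative.toAdd k) = 0 := by
    have h2 : Stmt2Aux.tU ^ (2 * Multiplicative.toAdd k) = 1 := by
      rw [_root_.zpow_mul]
      rw [show (Stmt2Aux.tU : (LaurentPolynomial ℤ)ˣ) ^ (2:ℤ)
          = Stmt2Aux.tU * Stmt2Aux.tU by rw [zpow_two]]
      exact hdet
    have := Stmt2Aux.tU_zpow_eq_one h2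
    omega
  have hk1 : k = 1 := by
    have : k = Multiplicative.ofAdd 0 := by
      rw [← hz]; rfl
    simpa using this
  rw [hk1] at h
  simp only [zpowersHom_apply, toAdd_one, zpow_zero, one_mul, MonoidHom.comp_apply] at h
  have hρw : ρ w = 1 := Stmt2Aux.jL_injective (by rw [h, _root_.map_one])
  have hw : w = 1 := Stmt2Aux.rho_injective n (by rw [hρw, _root_.map_one])
  rw [hk1, hw]
  rfl
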